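/- arXiv:1506.05506 — 5 statements merged into one kernel-verified Lean document; each statement's English description precedes it below -/
import Mathlib

section
/- The sum of squared deviations of y+ε equals ‖y − ȳ1_n‖² + (a(a+2)/(1+b))‖e‖², i.e., ‖y + ε − ȳ1_n‖² = ‖y − ȳ1_n‖² + (a(a+2)/(1+b))‖e‖². -/
open Matrix BigOperators

/-- Euclidean norm of a vector in ℝⁿ. -/
noncomputable def nrm {n : ℕ} (v : Fin n → ℝ) : ℝ := Real.sqrt (v ⬝ᵥ v)


lemma dot_self_nonneg' {n : ℕ} (v : Fin n → ℝ) : 0 ≤ v ⬝ᵥ v :=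
  Finset.sum_nonneg fun _ _ => mul_self_nonneg _

lemma nrm_sq {n : ℕ} (v : Fin n → ℝ) : nrm v ^ 2 = v ⬝ᵥ v :=
  Real.sq_sqrt (dot_self_nonneg' v)

/-- ‖y + ε − ȳ1‖² = ‖y − ȳ1‖² + (a(a+2)/(1+b))‖e‖². -/
theorem sum_squared_deviations {n p : ℕ} (X : Matrix (Fin n) (Fin (p + 1)) ℝ)
    (hX : IsUnit (Xᵀ * X).det)
    (hone : ∃ j, ∀ i, X i j = 1)
    (y e : Fin n → ℝ)
    (he : e = y - X.mulVec ((Xᵀ * X)⁻¹.mulVec (Xᵀ.mulVec y)))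
    (he0 : e ≠ 0) (u : Fin n → ℝ) (hu0 : u ≠ 0)
    (hXu : Xᵀ.mulVec u = 0) (heu : e ⬝ᵥ u = 0)
    (a b : ℝ) (ha : a ≠ 0) (hb : 0 ≤ b)
    (ε : Fin n → ℝ)
    (hε : ε = (a * nrm e / (1 + b)) •
        ((nrm e)⁻¹ • e + Real.sqrt b • ((nrm u)⁻¹ • u)))
    (ybar : ℝ) (hybar : ybar = (∑ i, y i) / (n : ℝ)) :
    (nrm (y + ε - fun _ => ybar)) ^ 2 =
      (nrm (y - fun _ => ybar)) ^ 2 + (a * (a + 2) / (1 + b)) * (nrm e) ^ 2 := by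
  -- X'e = 0
  have hXe : Xᵀ.mulVec e = 0 := by
    rw [he, Matrix.mulVec_sub, Matrix.mulVec_mulVec, Matrix.mulVec_mulVec,
      Matrix.mul_nonsing_inv _ hX, Matrix.one_mulVec, sub_self]
  -- orthogonality to columns: v ⬝ X w = 0
  have horth : ∀ (v : Fin n → ℝ), Xᵀ.mulVec v = 0 → ∀ w, v ⬝ᵥ X.mulVec w = 0 := by
    intro v hv w
    rw [Matrix.dotProduct_mulVec, ← Matrix.mulVec_transpose, hv, zero_dotProduct]
  have hsum : ∀ (v : Fin n → ℝ), Xᵀ.mulVec v = 0 → (∑ i, v i) = 0 := by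
    intro v hv
    obtain ⟨j, hj⟩ := hone
    have := congrFun hv j
    simpa [Matrix.mulVec, dotProduct, hj] using this
  set w := (Xᵀ * X)⁻¹.mulVec (Xᵀ.mulVec y) with hw
  have hy : y = e + X.mulVec w := by rw [he]; abel
  have hed : e ⬝ᵥ (y - fun _ => ybar) = e ⬝ᵥ e := by
    rw [dotProduct_sub, hy, dotProduct_add, horth e hXe w]
    have : (e ⬝ᵥ fun _ => ybar) = (∑ i, e i) * ybar := by
      simp [dotProduct, Finset.sum_mul]
    rw [this, hsum e hXe]; ring
  have hud : u ⬝ᵥ (y - fun _ => ybar) = 0 := by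
    rw [dotProduct_sub, hy, dotProduct_add, horth u hXu w]
    have h1 : (u ⬝ᵥ fun _ => ybar) = (∑ i, u i) * ybar := by
      simp [dotProduct, Finset.sum_mul]
    have h2 : u ⬝ᵥ e = 0 := by rw [dotProduct_comm]; exact heu
    rw [h1, hsum u hXu, h2]; ring
  -- positivity
  have hE : 0 < e ⬝ᵥ e := lt_of_le_of_ne (dot_self_nonneg' e)
    (fun h => he0 ((dotProduct_self_eq_zero).mp h.symm))
  have hU : 0 < u ⬝ᵥ u := lt_of_le_of_ne (dot_self_nonneg' u)
    (fun h => hu0 ((dotProduct_self_eq_zero).mp h.symm))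
  have hnE : nrm e = Real.sqrt (e ⬝ᵥ e) := rfl
  have hnE0 : nrm e ≠ 0 := by
    rw [hnE]; exact (Real.sqrt_pos.mpr hE).ne'
  have hnU0 : nrm u ≠ 0 := by
    show Real.sqrt (u ⬝ᵥ u) ≠ 0; exact (Real.sqrt_pos.mpr hU).ne'
  have hb1 : (1 : ℝ) + b ≠ 0 := by positivity
  have hrw : y + ε - (fun _ => ybar) = (y - fun _ => ybar) + ε := by
    funext i; simp; ring
  rw [hrw, nrm_sq, nrm_sq, nrm_sq]
  set d := y - fun _ => ybar with hd
  have hde : d ⬝ᵥ e = e ⬝ᵥ e := by rw [dotProduct_comm]; exact hed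
  have hdu : d ⬝ᵥ u = 0 := by rw [dotProduct_comm]; exact hud
  rw [hε]
  simp only [dotProduct_add, add_dotProduct, dotProduct_smul,
    smul_dotProduct, smul_eq_mul, hde, hdu, hed, hud, heu]
  have hue : u ⬝ᵥ e = 0 := by rw [dotProduct_comm]; exact heu
  rw [hue]
  have hsb : Real.sqrt b * Real.sqrt b = b := Real.mul_self_sqrt hb
  have hsE : nrm e * nrm e = e ⬝ᵥ e := by
    rw [hnE]; exact Real.mul_self_sqrt (dot_self_nonneg' e)
  have hsU : nrm u * nrm u = u ⬝ᵥ u := by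
    show Real.sqrt _ * Real.sqrt _ = _; exact Real.mul_self_sqrt (dot_self_nonneg' u)
  rw [← hsE, ← hsU]
  field_simp
  ring_nf
  simp only [Real.sq_sqrt hb]
  ring
end

section
/- The residual sum of squares for the perturbed response satisfies ‖(I − X(X'X)^{-1}X')(y + ε)‖² = (1 + a(a+2)/(1+b))‖e‖². -/
open Matrix BigOperators

/-- ‖(I − X(X'X)⁻¹X')(y + ε)‖² = (1 + a(a+2)/(1+b))‖e‖². -/
theorem residual_sum_of_squares_perturbed {n p : ℕ}
    (X : Matrix (Fin n) (Fin (p + 1)) ℝ)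
    (hX : IsUnit (Xᵀ * X).det)
    (y e : Fin n → ℝ)
    (he : e = y - X.mulVec ((Xᵀ * X)⁻¹.mulVec (Xᵀ.mulVec y)))
    (he0 : e ≠ 0) (u : Fin n → ℝ) (hu0 : u ≠ 0)
    (hXu : Xᵀ.mulVec u = 0) (heu : e ⬝ᵥ u = 0)
    (a b : ℝ) (ha : a ≠ 0) (hb : 0 ≤ b)
    (ε : Fin n → ℝ)
    (hε : ε = (a * nrm e / (1 + b)) •
        ((nrm e)⁻¹ • e + Real.sqrt b • ((nrm u)⁻¹ • u))) :
    (nrm ((y + ε) - X.mulVec ((Xᵀ * X)⁻¹.mulVec (Xᵀ.mulVec (y + ε))))) ^ 2 =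
      (1 + a * (a + 2) / (1 + b)) * (nrm e) ^ 2 := by
  have hinv : (Xᵀ * X) * (Xᵀ * X)⁻¹ = 1 := Matrix.mul_nonsing_inv _ hX
  have hXe : Xᵀ.mulVec e = 0 := by
    subst he
    rw [Matrix.mulVec_sub, Matrix.mulVec_mulVec, Matrix.mulVec_mulVec, hinv,
      Matrix.one_mulVec, sub_self]
  have hXε : Xᵀ.mulVec ε = 0 := by
    subst hε
    rw [Matrix.mulVec_smul, Matrix.mulVec_add, Matrix.mulVec_smul,
      Matrix.mulVec_smul, Matrix.mulVec_smul, hXe, hXu]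
    simp
  have hres : (y + ε) - X.mulVec ((Xᵀ * X)⁻¹.mulVec (Xᵀ.mulVec (y + ε))) = e + ε := by
    simp only [Matrix.mulVec_add, hXε, Matrix.mulVec_zero, add_zero, he]
    abel
  rw [hres]
  -- key scalar facts
  have hee : 0 < e ⬝ᵥ e := by
    have h : (0:ℝ) ≤ e ⬝ᵥ e := Finset.sum_nonneg (fun i _ => mul_self_nonneg (e i))
    rcases lt_or_eq_of_le h with h' | h'
    · exact h'
    · exfalso; apply he0; funext i
      have := Finset.sum_eq_zero_iff_of_nonneg (fun i _ => mul_self_nonneg (e i)) |>.mp h'.symm i (Finset.mem_univ i)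
      exact mul_self_eq_zero.mp this
  have huu : 0 < u ⬝ᵥ u := by
    have h : (0:ℝ) ≤ u ⬝ᵥ u := Finset.sum_nonneg (fun i _ => mul_self_nonneg (u i))
    rcases lt_or_eq_of_le h with h' | h'
    · exact h'
    · exfalso; apply hu0; funext i
      have := Finset.sum_eq_zero_iff_of_nonneg (fun i _ => mul_self_nonneg (u i)) |>.mp h'.symm i (Finset.mem_univ i)
      exact mul_self_eq_zero.mp this
  have hE : 0 < nrm e := Real.sqrt_pos.mpr hee
  have hU : 0 < nrm u := Real.sqrt_pos.mpr huu
  have hEsq : (nrm e) ^ 2 = e ⬝ᵥ e := Real.sq_sqrt hee.le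
  have hUsq : (nrm u) ^ 2 = u ⬝ᵥ u := Real.sq_sqrt huu.le
  have hb1 : (0:ℝ) < 1 + b := by linarith
  have hbsq : Real.sqrt b ^ 2 = b := Real.sq_sqrt hb
  have hue : u ⬝ᵥ e = 0 := by rw [dotProduct_comm]; exact heu
  have hsq : nrm (e + ε) ^ 2 = (e + ε) ⬝ᵥ (e + ε) := by
    apply Real.sq_sqrt
    exact Finset.sum_nonneg (fun i _ => mul_self_nonneg (e i + ε i))
  rw [hsq, hε]
  simp only [dotProduct_add, add_dotProduct, dotProduct_smul,
    smul_dotProduct, smul_eq_mul, heu, hue]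
  rw [show e ⬝ᵥ e = (nrm e)^2 from hEsq.symm, show u ⬝ᵥ u = (nrm u)^2 from hUsq.symm]
  field_simp
  ring_nf
  simp only [Real.sq_sqrt hb]
  ring
end

section
/- The correlation coefficient between y and y+ε equals (1 + b + a(1−R²)) / ((1+b)^{1/2}(1 + b + a(a+2)(1−R²))^{1/2}). -/
open Matrix BigOperators

/-- The correlation coefficient between y and y+ε equals
(1 + b + a(1−R²)) / ((1+b)^{1/2}(1 + b + a(a+2)(1−R²))^{1/2}). -/
theorem correlation_perturbed {n p : ℕ} (X : Matrix (Fin n) (Fin (p + 1)) ℝ)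
    (hX : IsUnit (Xᵀ * X).det)
    (hone : ∃ j, ∀ i, X i j = 1)
    (y e : Fin n → ℝ)
    (he : e = y - X.mulVec ((Xᵀ * X)⁻¹.mulVec (Xᵀ.mulVec y)))
    (he0 : e ≠ 0)
    (ybar : ℝ) (hybar : ybar = (∑ i, y i) / (n : ℝ))
    (hy : y ≠ fun _ => ybar)
    (R2 : ℝ) (hR2 : R2 = 1 - (nrm e) ^ 2 / (nrm (y - fun _ => ybar)) ^ 2)
    (u : Fin n → ℝ) (hu0 : u ≠ 0)
    (hXu : Xᵀ.mulVec u = 0) (heu : e ⬝ᵥ u = 0)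
    (a b : ℝ) (ha : a ≠ 0) (hb : 0 ≤ b)
    (hpos : 0 < 1 + b + a * (a + 2) * (1 - R2))
    (ε : Fin n → ℝ)
    (hε : ε = (a * nrm e / (1 + b)) •
        ((nrm e)⁻¹ • e + Real.sqrt b • ((nrm u)⁻¹ • u)))
    (r : ℝ)
    (hr : r = (y - fun _ => ybar) ⬝ᵥ (y + ε - fun _ => ybar) /
        (nrm (y - fun _ => ybar) * nrm (y + ε - fun _ => ybar))) :
    r = (1 + b + a * (1 - R2)) /
      (Real.sqrt (1 + b) * Real.sqrt (1 + b + a * (a + 2) * (1 - R2))) := by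
  have h1b : (0:ℝ) < 1 + b := by linarith
  have hsq1b : Real.sqrt (1 + b) * Real.sqrt (1 + b) = 1 + b :=
    Real.mul_self_sqrt h1b.le
  have hposdot : ∀ v : Fin n → ℝ, v ≠ 0 → 0 < v ⬝ᵥ v := by
    intro v h
    have h1 : 0 ≤ v ⬝ᵥ v := Finset.sum_nonneg fun i _ => mul_self_nonneg _
    rcases h1.lt_or_eq with h2 | h2
    · exact h2
    · exact absurd (dotProduct_self_eq_zero.mp h2.symm) h
  have hE : 0 < e ⬝ᵥ e := hposdot e he0
  have hU : 0 < u ⬝ᵥ u := hposdot u hu0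
  have hne2 : nrm e * nrm e = e ⬝ᵥ e := Real.mul_self_sqrt hE.le
  have hnu2 : nrm u * nrm u = u ⬝ᵥ u := Real.mul_self_sqrt hU.le
  have hnepos : 0 < nrm e := Real.sqrt_pos.mpr hE
  have hnupos : 0 < nrm u := Real.sqrt_pos.mpr hU
  -- X'e = 0
  have hXe : Xᵀ.mulVec e = 0 := by
    rw [he, Matrix.mulVec_sub, Matrix.mulVec_mulVec, Matrix.mulVec_mulVec,
      Matrix.mul_nonsing_inv _ hX, Matrix.one_mulVec, sub_self]
  obtain ⟨j, hj⟩ := hone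
  have hesum : ∑ i, e i = 0 := by
    have h := congrFun hXe j
    simpa [Matrix.mulVec, dotProduct, hj] using h
  have husum : ∑ i, u i = 0 := by
    have h := congrFun hXu j
    simpa [Matrix.mulVec, dotProduct, hj] using h
  have hfit : ∀ v : Fin n → ℝ, Xᵀ.mulVec v = 0 →
      v ⬝ᵥ X.mulVec ((Xᵀ * X)⁻¹.mulVec (Xᵀ.mulVec y)) = 0 := by
    intro v hv
    rw [Matrix.dotProduct_mulVec, ← Matrix.mulVec_transpose, hv, zero_dotProduct]
  have hyeq : y = e + X.mulVec ((Xᵀ * X)⁻¹.mulVec (Xᵀ.mulVec y)) := by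
    rw [he]; abel
  have hey : e ⬝ᵥ y = e ⬝ᵥ e := by
    calc e ⬝ᵥ y = e ⬝ᵥ (e + X.mulVec ((Xᵀ * X)⁻¹.mulVec (Xᵀ.mulVec y))) := by rw [← hyeq]
    _ = e ⬝ᵥ e := by rw [dotProduct_add, hfit e hXe, add_zero]
  have huy : u ⬝ᵥ y = 0 := by
    calc u ⬝ᵥ y = u ⬝ᵥ (e + X.mulVec ((Xᵀ * X)⁻¹.mulVec (Xᵀ.mulVec y))) := by rw [← hyeq]
    _ = 0 := by
        rw [dotProduct_add, hfit u hXu, add_zero, dotProduct_comm, heu]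
  set d : Fin n → ℝ := y - (fun _ => ybar) with hddef
  have hd0 : d ≠ 0 := by
    intro h
    apply hy
    funext i
    have := congrFun h i
    simpa [hddef, sub_eq_zero] using this
  have hD : 0 < d ⬝ᵥ d := hposdot d hd0
  have hnd2 : nrm d * nrm d = d ⬝ᵥ d := Real.mul_self_sqrt hD.le
  have hconst : ∀ v : Fin n → ℝ, (∑ i, v i = 0) → v ⬝ᵥ (fun _ => ybar) = 0 := by
    intro v hv
    simp [dotProduct, ← Finset.sum_mul, hv]
  have hed : e ⬝ᵥ d = e ⬝ᵥ e := by
    rw [hddef, dotProduct_sub, hey, hconst e hesum, sub_zero]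
  have hud : u ⬝ᵥ d = 0 := by
    rw [hddef, dotProduct_sub, huy, hconst u husum, sub_zero]
  have hde : d ⬝ᵥ e = e ⬝ᵥ e := by rw [dotProduct_comm, hed]
  have hdu : d ⬝ᵥ u = 0 := by rw [dotProduct_comm, hud]
  -- dot products with ε
  have hdε : d ⬝ᵥ ε = a * (e ⬝ᵥ e) / (1 + b) := by
    rw [hε]
    simp only [dotProduct_smul, dotProduct_add, smul_eq_mul, hde, hdu]
    rw [← hne2]
    field_simp
    ring
  have hεε : ε ⬝ᵥ ε = a ^ 2 * (e ⬝ᵥ e) / (1 + b) := by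
    rw [hε]
    simp only [smul_dotProduct, dotProduct_smul, add_dotProduct,
      dotProduct_add, smul_eq_mul]
    rw [heu, dotProduct_comm u e, heu, ← hne2, ← hnu2]
    obtain ⟨sb, hsb⟩ : ∃ sb, Real.sqrt b = sb := ⟨_, rfl⟩
    have hbb : sb * sb = b := by rw [← hsb]; exact Real.mul_self_sqrt hb
    have h1b' : (1 : ℝ) + sb * sb ≠ 0 := by rw [hbb]; exact h1b.ne'
    rw [hsb, ← hbb]
    field_simp
    ring
  have hnum' : d ⬝ᵥ (d + ε) = (d ⬝ᵥ d) * (1 + b + a * (1 - R2)) / (1 + b) := by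
    have hED : e ⬝ᵥ e = (1 - R2) * (d ⬝ᵥ d) := by
      rw [hR2]
      rw [show (nrm e)^2 = e ⬝ᵥ e by rw [sq, hne2],
        show (nrm (y - fun _ => ybar))^2 = d ⬝ᵥ d by rw [← hddef, sq, hnd2]]
      field_simp
      ring
    rw [dotProduct_add, hdε, hED]
    field_simp
  have hden2' : (d + ε) ⬝ᵥ (d + ε) =
      (d ⬝ᵥ d) * (1 + b + a * (a + 2) * (1 - R2)) / (1 + b) := by
    have hED : e ⬝ᵥ e = (1 - R2) * (d ⬝ᵥ d) := by
      rw [hR2]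
      rw [show (nrm e)^2 = e ⬝ᵥ e by rw [sq, hne2],
        show (nrm (y - fun _ => ybar))^2 = d ⬝ᵥ d by rw [← hddef, sq, hnd2]]
      field_simp
      ring
    rw [add_dotProduct, dotProduct_add, dotProduct_add,
      dotProduct_comm ε d, hdε, hεε, hED]
    field_simp
    ring
  have hrewr : y + ε - (fun _ => ybar) = d + ε := by
    funext i
    simp [hddef]
    ring
  have hQpos : 0 < 1 + b + a * (a + 2) * (1 - R2) := hpos
  have hnrmsum : nrm (d + ε) =
      Real.sqrt (d ⬝ᵥ d) * Real.sqrt (1 + b + a * (a + 2) * (1 - R2)) / Real.sqrt (1 + b) := by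
    rw [show nrm (d + ε) = Real.sqrt ((d + ε) ⬝ᵥ (d + ε)) from rfl, hden2',
      Real.sqrt_div (by positivity), Real.sqrt_mul hD.le]
  have hQs : (0:ℝ) < Real.sqrt (1 + b + a * (a + 2) * (1 - R2)) := Real.sqrt_pos.mpr hQpos
  have h1bs : (0:ℝ) < Real.sqrt (1 + b) := Real.sqrt_pos.mpr h1b
  have hDs : (0:ℝ) < Real.sqrt (d ⬝ᵥ d) := Real.sqrt_pos.mpr hD
  have hndD : nrm d = Real.sqrt (d ⬝ᵥ d) := rfl
  rw [hr, hrewr, hnum', hnrmsum, hndD]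
  rw [div_eq_div_iff (by positivity) (by positivity)]
  have hsqQ : Real.sqrt (1 + b + a * (a + 2) * (1 - R2)) *
      Real.sqrt (1 + b + a * (a + 2) * (1 - R2)) = 1 + b + a * (a + 2) * (1 - R2) :=
    Real.mul_self_sqrt hQpos.le
  have hsqD : Real.sqrt (d ⬝ᵥ d) * Real.sqrt (d ⬝ᵥ d) = d ⬝ᵥ d := Real.mul_self_sqrt hD.le
  field_simp
  rw [show 1 + b + a * (1 - R2) * (a + 2) = 1 + b + a * (a + 2) * (1 - R2) by ring]
  linear_combination ((1 + b + a * (1 - R2)) * Real.sqrt (1 + b + a * (a + 2) * (1 - R2)) *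
      (d ⬝ᵥ d)) * hsq1b -
    ((1 + b + a * (1 - R2)) * Real.sqrt (1 + b + a * (a + 2) * (1 - R2)) * (1 + b)) * hsqD
end

section
/- When a = −2, the residual norm is unchanged: ‖e + ε‖ = ‖e‖, and hence every t-value for y+ε equals the corresponding t-value for y, for any b > 0. -/
open Matrix BigOperators

/-- When a = −2, ‖e + ε‖ = ‖e‖, and hence every t-value for
y+ε equals the corresponding t-value for y, for any b > 0. -/
theorem t_values_invariant_a_eq_neg_two {n p : ℕ}
    (X : Matrix (Fin n) (Fin (p + 1)) ℝ)
    (hX : IsUnit (Xᵀ * X).det)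
    (y e : Fin n → ℝ)
    (he : e = y - X.mulVec ((Xᵀ * X)⁻¹.mulVec (Xᵀ.mulVec y)))
    (he0 : e ≠ 0) (u : Fin n → ℝ) (hu0 : u ≠ 0)
    (hXu : Xᵀ.mulVec u = 0) (heu : e ⬝ᵥ u = 0)
    (b : ℝ) (hb : 0 < b)
    (ε : Fin n → ℝ)
    (hε : ε = ((-2 : ℝ) * nrm e / (1 + b)) •
        ((nrm e)⁻¹ • e + Real.sqrt b • ((nrm u)⁻¹ • u)))
    (βhat βhatt : Fin (p + 1) → ℝ)
    (hβ : βhat = (Xᵀ * X)⁻¹.mulVec (Xᵀ.mulVec y))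
    (hβt : βhatt = (Xᵀ * X)⁻¹.mulVec (Xᵀ.mulVec (y + ε)))
    (d : Fin (p + 1) → ℝ) (hd : d = fun j => (Xᵀ * X)⁻¹ j j)
    (t tt : Fin (p + 1) → ℝ)
    (ht : t = fun j => Real.sqrt ((n : ℝ) - p - 1) / d j * (βhat j / nrm e))
    (htt : tt = fun j =>
      Real.sqrt ((n : ℝ) - p - 1) / d j *
        (βhatt j / nrm ((y + ε) - X.mulVec βhatt))) :
    nrm (e + ε) = nrm e ∧ ∀ j, tt j = t j := by
  have hee0 : (0:ℝ) < e ⬝ᵥ e := by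
    have := dotProduct_self_eq_zero (v := e)
    have h1 : e ⬝ᵥ e ≠ 0 := fun h => he0 (this.mp h)
    have h2 : 0 ≤ e ⬝ᵥ e := Finset.sum_nonneg fun i _ => mul_self_nonneg _
    exact lt_of_le_of_ne h2 (Ne.symm h1)
  have huu0 : (0:ℝ) < u ⬝ᵥ u := by
    have := dotProduct_self_eq_zero (v := u)
    have h1 : u ⬝ᵥ u ≠ 0 := fun h => hu0 (this.mp h)
    exact lt_of_le_of_ne (Finset.sum_nonneg fun i _ => mul_self_nonneg _) (Ne.symm h1)
  have hne : (0:ℝ) < nrm e := Real.sqrt_pos.mpr hee0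
  have hnu : (0:ℝ) < nrm u := Real.sqrt_pos.mpr huu0
  have hee : e ⬝ᵥ e = nrm e * nrm e := (Real.mul_self_sqrt hee0.le).symm
  have huu : u ⬝ᵥ u = nrm u * nrm u := (Real.mul_self_sqrt huu0.le).symm
  have hbb : Real.sqrt b * Real.sqrt b = b := Real.mul_self_sqrt hb.le
  have h1b : (1:ℝ) + b ≠ 0 := by positivity
  have key : (e + ε) ⬝ᵥ (e + ε) = e ⬝ᵥ e := by
    subst hε
    simp only [dotProduct_add, add_dotProduct, smul_dotProduct,
      dotProduct_smul, dotProduct_comm u e, heu, smul_eq_mul]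
    rw [hee, huu]
    field_simp
    ring_nf
    rw [Real.sq_sqrt hb.le]
    ring
  have hnrm : nrm (e + ε) = nrm e := by
    unfold nrm; rw [key]
  -- Xᵀ e = 0
  have hXe : Xᵀ.mulVec e = 0 := by
    subst he
    rw [Matrix.mulVec_sub, Matrix.mulVec_mulVec, Matrix.mulVec_mulVec,
      Matrix.mul_nonsing_inv _ hX, Matrix.one_mulVec, sub_self]
  have hXε : Xᵀ.mulVec ε = 0 := by
    subst hε
    rw [Matrix.mulVec_smul, Matrix.mulVec_add, Matrix.mulVec_smul, Matrix.mulVec_smul,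
      Matrix.mulVec_smul, hXe, hXu]
    simp
  have hβeq : βhatt = βhat := by
    rw [hβt, hβ, Matrix.mulVec_add, hXε, add_zero]
  have hres : (y + ε) - X.mulVec βhatt = e + ε := by
    rw [hβeq, hβ, he]; abel
  have hres' : y + ε - X.mulVec βhat = e + ε := by rw [← hβeq]; exact hres
  refine ⟨hnrm, fun j => ?_⟩
  simp only [htt, ht, hβeq, hres', hnrm]
end

section
/- When a = −2, the correlation coefficient of y and y+ε equals 1 − 2(1−R²)/(1+b). -/
open Matrix BigOperators

lemma dot_self_pos' {n : ℕ} {v : Fin n → ℝ} (hv : v ≠ 0) : 0 < v ⬝ᵥ v := by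
  rcases Function.ne_iff.mp hv with ⟨i, hi⟩
  have h1 : 0 < v i * v i := mul_self_pos.mpr (by simpa using hi)
  calc (0:ℝ) < v i * v i := h1
    _ ≤ ∑ j, v j * v j :=
      Finset.single_le_sum (fun j _ => mul_self_nonneg (v j)) (Finset.mem_univ i)

lemma nrm_mul_self {n : ℕ} (v : Fin n → ℝ) : nrm v * nrm v = v ⬝ᵥ v :=
  Real.mul_self_sqrt (dot_self_nonneg' v)

/-- When a = −2, the correlation coefficient of y and y+ε
equals 1 − 2(1−R²)/(1+b). -/
theorem correlation_a_eq_neg_two {n p : ℕ}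
    (X : Matrix (Fin n) (Fin (p + 1)) ℝ)
    (hX : IsUnit (Xᵀ * X).det)
    (hone : ∃ j, ∀ i, X i j = 1)
    (y e : Fin n → ℝ)
    (he : e = y - X.mulVec ((Xᵀ * X)⁻¹.mulVec (Xᵀ.mulVec y)))
    (he0 : e ≠ 0)
    (ybar : ℝ) (hybar : ybar = (∑ i, y i) / (n : ℝ))
    (hy : y ≠ fun _ => ybar)
    (R2 : ℝ) (hR2 : R2 = 1 - (nrm e) ^ 2 / (nrm (y - fun _ => ybar)) ^ 2)
    (u : Fin n → ℝ) (hu0 : u ≠ 0)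
    (hXu : Xᵀ.mulVec u = 0) (heu : e ⬝ᵥ u = 0)
    (b : ℝ) (hb : 0 < b)
    (ε : Fin n → ℝ)
    (hε : ε = ((-2 : ℝ) * nrm e / (1 + b)) •
        ((nrm e)⁻¹ • e + Real.sqrt b • ((nrm u)⁻¹ • u)))
    (r : ℝ)
    (hr : r = (y - fun _ => ybar) ⬝ᵥ (y + ε - fun _ => ybar) /
        (nrm (y - fun _ => ybar) * nrm (y + ε - fun _ => ybar))) :
    r = 1 - 2 * (1 - R2) / (1 + b) := by
  have h1b : (0:ℝ) < 1 + b := by linarith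
  have h1b' : (1:ℝ) + b ≠ 0 := ne_of_gt h1b
  set d : Fin n → ℝ := y - fun _ => ybar with hd
  have hd0 : d ≠ 0 := by
    intro h
    apply hy
    funext i
    have := congrFun h i
    simpa [hd, sub_eq_zero] using this
  -- scalars
  set E : ℝ := e ⬝ᵥ e with hE
  set U : ℝ := u ⬝ᵥ u with hU
  set D : ℝ := d ⬝ᵥ d with hD
  have hEpos : 0 < E := dot_self_pos' he0
  have hUpos : 0 < U := dot_self_pos' hu0
  have hDpos : 0 < D := dot_self_pos' hd0
  have hne : nrm e * nrm e = E := nrm_mul_self e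
  have hnu : nrm u * nrm u = U := nrm_mul_self u
  have hnd : nrm d * nrm d = D := nrm_mul_self d
  have hne0 : nrm e ≠ 0 := by
    intro h; rw [h, mul_zero] at hne; exact absurd hne.symm (ne_of_gt hEpos)
  have hnu0 : nrm u ≠ 0 := by
    intro h; rw [h, mul_zero] at hnu; exact absurd hnu.symm (ne_of_gt hUpos)
  have hnd0 : nrm d ≠ 0 := by
    intro h; rw [h, mul_zero] at hnd; exact absurd hnd.symm (ne_of_gt hDpos)
  have hsb : Real.sqrt b * Real.sqrt b = b := Real.mul_self_sqrt hb.le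
  -- orthogonality of e to columns of X
  have hXe : Xᵀ.mulVec e = 0 := by
    rw [he, mulVec_sub, mulVec_mulVec, mulVec_mulVec,
      Matrix.mul_nonsing_inv _ hX, one_mulVec, sub_self]
  have hdot_eXv : ∀ w, e ⬝ᵥ X.mulVec w = 0 := by
    intro w
    rw [dotProduct_mulVec, ← Matrix.mulVec_transpose, hXe, zero_dotProduct]
  have hdot_uXv : ∀ w, u ⬝ᵥ X.mulVec w = 0 := by
    intro w
    rw [dotProduct_mulVec, ← Matrix.mulVec_transpose, hXu, zero_dotProduct]
  obtain ⟨j, hj⟩ := hone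
  have hesum : ∑ i, e i = 0 := by
    have h := congrFun hXe j
    simpa [Matrix.mulVec, dotProduct, Matrix.transpose, hj] using h
  have husum : ∑ i, u i = 0 := by
    have h := congrFun hXu j
    simpa [Matrix.mulVec, dotProduct, Matrix.transpose, hj] using h
  have hec : e ⬝ᵥ (fun _ => ybar) = 0 := by
    simp [dotProduct, ← Finset.sum_mul, hesum]
  have huc : u ⬝ᵥ (fun _ => ybar) = 0 := by
    simp [dotProduct, ← Finset.sum_mul, husum]
  have hy_eq : y = e + X.mulVec ((Xᵀ * X)⁻¹.mulVec (Xᵀ.mulVec y)) := by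
    rw [he]; abel
  have hey : e ⬝ᵥ y = E := by
    conv_lhs => rw [hy_eq]
    rw [dotProduct_add, hdot_eXv, add_zero, hE]
  have huy : u ⬝ᵥ y = 0 := by
    conv_lhs => rw [hy_eq]
    rw [dotProduct_add, hdot_uXv, add_zero, dotProduct_comm, heu]
  have hed : e ⬝ᵥ d = E := by
    rw [hd, dotProduct_sub, hey, hec, sub_zero]
  have hud : u ⬝ᵥ d = 0 := by
    rw [hd, dotProduct_sub, huy, huc, sub_zero]
  have hde : d ⬝ᵥ e = E := by rw [dotProduct_comm, hed]
  have hdu : d ⬝ᵥ u = 0 := by rw [dotProduct_comm, hud]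
  have hue : u ⬝ᵥ e = 0 := by rw [dotProduct_comm, heu]
  -- dot products with ε
  have hdε : d ⬝ᵥ ε = -2 * E / (1 + b) := by
    rw [hε]
    simp only [dotProduct_smul, dotProduct_add, smul_eq_mul, hde, hdu, mul_zero, add_zero]
    rw [← hne]
    field_simp
  have hεε : ε ⬝ᵥ ε = 4 * E / (1 + b) := by
    rw [hε]
    simp only [smul_dotProduct, dotProduct_smul, add_dotProduct, dotProduct_add,
      smul_eq_mul, hed, hue, heu, hE.symm, hU.symm, mul_zero, zero_mul, add_zero, zero_add]
    rw [← hne, ← hnu]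
    field_simp
    ring_nf
    rw [Real.sq_sqrt hb.le]
  -- rewrite y + ε - ybar as d + ε
  have hkey : (y + ε - fun _ => ybar) = d + ε := by
    rw [hd]; abel
  have hsum_sq : (d + ε) ⬝ᵥ (d + ε) = D := by
    rw [dotProduct_add, add_dotProduct, add_dotProduct, hdε,
      dotProduct_comm ε d, hdε, hεε, ← hD]
    field_simp
    ring
  have hnrm_sum : nrm (d + ε) = nrm d := by
    unfold nrm
    rw [hsum_sq, hD]
  have hd_sum : d ⬝ᵥ (d + ε) = D - 2 * E / (1 + b) := by
    rw [dotProduct_add, hdε, ← hD]; ring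
  -- final computation
  have hnd2 : (nrm d)^2 = D := by rw [sq, hnd]
  have hne2 : (nrm e)^2 = E := by rw [sq, hne]
  rw [hr, hR2, hkey, hd_sum, hnrm_sum, hnd, hne2, hnd2]
  field_simp [hDpos.ne']
  ring
end
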